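/- Suppose a₁/q₁ < a₂/q₂ with 0 < a₁ < q₁, 0 < a₂ < q₂, and a₂q₁ - a₁q₂ = 1. Define h(a/q) = q + a + ā where ā is the multiplicative inverse of a mod q in [1, q). Let q̄̄₁ be the multiplicative inverse of q₁ mod q₂ in [1, q₂). Then h(a₁/q₁) = (2 + ⌊q₂/q₁⌋)·q₁ - q₂ + (q₁·q̄̄₁ - 1)/q₂. -/
import Mathlib


theorem stmt_3 (a₁ q₁ a₂ q₂ ab₁ qbb₁ : ℤ)
    (ha₁ : 0 < a₁) (ha₁q : a₁ < q₁) (ha₂ : 0 < a₂) (ha₂q : a₂ < q₂)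
    (hlt : (a₁ : ℚ) / q₁ < (a₂ : ℚ) / q₂)
    (huni : a₂ * q₁ - a₁ * q₂ = 1)
    (hi1 : 1 ≤ ab₁) (hi2 : ab₁ < q₁) (hinv : a₁ * ab₁ ≡ 1 [ZMOD q₁])
    (hc1 : 1 ≤ qbb₁) (hc2 : qbb₁ < q₂) (hcinv : q₁ * qbb₁ ≡ 1 [ZMOD q₂]) :
    q₁ + a₁ + ab₁ = (2 + q₂ / q₁) * q₁ - q₂ + (q₁ * qbb₁ - 1) / q₂ := by
  -- step 1: qbb₁ = a₂
  obtain ⟨m, hm⟩ := (Int.modEq_iff_dvd.mp hcinv)  -- q₂ ∣ 1 - q₁ * qbb₁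
  obtain ⟨n, hn⟩ := (Int.modEq_iff_dvd.mp hinv)   -- q₁ ∣ 1 - a₁ * ab₁
  -- coprimality of q₁ and q₂
  have hcop : IsCoprime q₂ q₁ := ⟨-a₁, a₂, by linarith⟩
  have hqeq : qbb₁ = a₂ := by
    have hdvd : q₂ ∣ q₁ * (qbb₁ - a₂) := by
      exact ⟨-(m + a₁), by linear_combination -hm - huni⟩
    have h2 : q₂ ∣ (qbb₁ - a₂) := (IsCoprime.dvd_of_dvd_mul_left hcop hdvd)
    obtain ⟨c, hc⟩ := h2
    have : c = 0 := by
      rcases lt_trichotomy c 0 with h | h | h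
      · nlinarith
      · exact h
      · nlinarith
    subst this
    simp at hc
    omega
  -- so (q₁ * qbb₁ - 1)/q₂ = a₁
  have hq2pos : 0 < q₂ := by omega
  have hlast : (q₁ * qbb₁ - 1) / q₂ = a₁ := by
    rw [hqeq]
    have : q₁ * a₂ - 1 = a₁ * q₂ := by linarith
    rw [this, Int.mul_ediv_cancel _ (by omega)]
  -- step 2: ab₁ ≡ -q₂ mod q₁
  have hcopa : IsCoprime a₁ q₁ := ⟨ab₁, n, by linear_combination -hn⟩
  have hdvd2 : q₁ ∣ a₁ * (ab₁ + q₂) := by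
    exact ⟨a₂ - n, by linear_combination -hn - huni⟩
  have h3 : q₁ ∣ (ab₁ + q₂) := (IsCoprime.dvd_of_dvd_mul_left hcopa.symm hdvd2)
  obtain ⟨k, hk⟩ := h3
  -- q₂ = (k-1)*q₁ + (q₁ - ab₁), with 0 ≤ q₁ - ab₁ < q₁
  have hq2 : q₂ = (q₁ - ab₁) + (k - 1) * q₁ := by linarith [hk]
  have hdiv : q₂ / q₁ = k - 1 := by
    rw [hq2, Int.add_mul_ediv_right _ _ (by omega : q₁ ≠ 0),
      Int.ediv_eq_zero_of_lt (by omega) (by omega)]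
    ring
  rw [hdiv, hlast]
  linarith [hk]
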